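/- Let A be an n×n real matrix and suppose H^{(ℓ+1)} = A^{ℓ+1} H^{(0)} W with H^{(0)} an n×d_0 matrix and W a d_0×c matrix whose entries are bounded in absolute value by β. Then the partial derivative of the (v,q)-entry of H^{(ℓ+1)} with respect to the (u,p)-entry of H^{(0)} has absolute value at most β · |(A^{ℓ+1})_{v,u}|, and hence, for the simplified framelet H^{(ℓ+1)} = ∑_k A_k^{ℓ+1} H^{(0)} W_k with each W_k entrywise bounded by β, the sensitivity is at most β · (∑_k |A_k|^{ℓ+1})_{v,u} entrywise (where |A_k| is the entrywise absolute value). -/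

import Mathlib

open Matrix BigOperators

lemma expand_aux {n d₀ c : ℕ} (M : Matrix (Fin n) (Fin n) ℝ)
    (H0 : Matrix (Fin n) (Fin d₀) ℝ) (W : Matrix (Fin d₀) (Fin c) ℝ)
    (u v : Fin n) (p : Fin d₀) (q : Fin c) (t : ℝ) :
    (M * (H0 + t • Matrix.single u p (1:ℝ)) * W) v q
      = (M * H0 * W) v q + (M v u * W p q) * t := by
  have h : M * (H0 + t • Matrix.single u p (1:ℝ)) * W
      = M * H0 * W + t • (M * Matrix.single u p (1:ℝ) * W) := by
    rw [Matrix.mul_add, Matrix.add_mul, Matrix.mul_smul, Matrix.smul_mul]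
  rw [h]
  simp only [Matrix.add_apply, Matrix.smul_apply, smul_eq_mul]
  congr 1
  rw [mul_comm]
  congr 1
  simp [Matrix.mul_apply, Matrix.single, Finset.mul_sum, ite_and,
    Finset.sum_ite_eq', mul_comm]

lemma deriv_eq_aux {n d₀ c : ℕ} (M : Matrix (Fin n) (Fin n) ℝ)
    (H0 : Matrix (Fin n) (Fin d₀) ℝ) (W : Matrix (Fin d₀) (Fin c) ℝ)
    (u v : Fin n) (p : Fin d₀) (q : Fin c) {cd : ℝ}
    (h : HasDerivAt
      (fun t : ℝ => (M * (H0 + t • Matrix.single u p (1:ℝ)) * W) v q) cd 0) :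
    cd = M v u * W p q := by
  have h2 : HasDerivAt
      (fun t : ℝ => (M * (H0 + t • Matrix.single u p (1:ℝ)) * W) v q)
      (M v u * W p q) 0 := by
    have he : (fun t : ℝ => (M * (H0 + t • Matrix.single u p (1:ℝ)) * W) v q)
        = fun t : ℝ => (M * H0 * W) v q + (M v u * W p q) * t := by
      funext t; exact expand_aux M H0 W u v p q t
    rw [he]
    simpa using ((hasDerivAt_id (0:ℝ)).const_mul (M v u * W p q)).const_add
      ((M * H0 * W) v q)
  exact h.unique h2

lemma abs_pow_entry_le {n : ℕ} (A : Matrix (Fin n) (Fin n) ℝ) (m : ℕ) (v u : Fin n) :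
    |(A ^ m) v u| ≤ ((A.map (fun x => |x|)) ^ m) v u := by
  induction m generalizing v u with
  | zero =>
    simp [Matrix.one_apply]
    split <;> simp
  | succ m ih =>
    rw [pow_succ, pow_succ, Matrix.mul_apply, Matrix.mul_apply]
    calc |∑ j, (A ^ m) v j * A j u| ≤ ∑ j, |(A ^ m) v j * A j u| :=
          Finset.abs_sum_le_sum_abs _ _
      _ ≤ ∑ j, ((A.map (fun x => |x|)) ^ m) v j * (A.map (fun x => |x|)) j u := by
          apply Finset.sum_le_sum
          intro j _
          rw [abs_mul]
          exact mul_le_mul (ih v j) (le_of_eq rfl) (abs_nonneg _)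
            (le_trans (abs_nonneg _) (ih v j))

theorem simplified_framelet_oversquashing_bound
    (n d₀ c K ℓ : ℕ) (β : ℝ)
    (A : Matrix (Fin n) (Fin n) ℝ) (W : Matrix (Fin d₀) (Fin c) ℝ)
    (hW : ∀ p q, |W p q| ≤ β)
    (Ak : Fin K → Matrix (Fin n) (Fin n) ℝ)
    (Wk : Fin K → Matrix (Fin d₀) (Fin c) ℝ)
    (hWk : ∀ k p q, |Wk k p q| ≤ β)
    (H0 : Matrix (Fin n) (Fin d₀) ℝ) :
    (∀ (v u : Fin n) (q : Fin c) (p : Fin d₀) (cd : ℝ),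
        HasDerivAt
          (fun t : ℝ => ((A ^ (ℓ + 1) * (H0 + t • Matrix.single u p 1) * W : Matrix (Fin n) (Fin c) ℝ)) v q)
          cd 0 →
        |cd| ≤ β * |(A ^ (ℓ + 1)) v u|) ∧
    (∀ (v u : Fin n) (q : Fin c) (p : Fin d₀) (cd : ℝ),
        HasDerivAt
          (fun t : ℝ =>
            ((∑ k, (Ak k) ^ (ℓ + 1) * (H0 + t • Matrix.single u p 1) * Wk k : Matrix (Fin n) (Fin c) ℝ)) v q)
          cd 0 →
        |cd| ≤ β * (∑ k, ((Ak k).map (fun x => |x|)) ^ (ℓ + 1)) v u) := by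
  constructor
  · intro v u q p cd h
    rw [deriv_eq_aux _ _ _ _ _ _ _ h, abs_mul, mul_comm]
    exact mul_le_mul_of_nonneg_right (hW p q) (abs_nonneg _)
  · intro v u q p cd h
    have hβ : 0 ≤ β := le_trans (abs_nonneg _) (hW p q)
    have h2 : HasDerivAt
        (fun t : ℝ =>
          ((∑ k, (Ak k) ^ (ℓ + 1) * (H0 + t • Matrix.single u p 1) * Wk k : Matrix (Fin n) (Fin c) ℝ)) v q)
        (∑ k, ((Ak k) ^ (ℓ + 1)) v u * Wk k p q) 0 := by
      have he : (fun t : ℝ =>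
          ((∑ k, (Ak k) ^ (ℓ + 1) * (H0 + t • Matrix.single u p 1) * Wk k : Matrix (Fin n) (Fin c) ℝ)) v q)
          = fun t : ℝ => ∑ k, (((Ak k) ^ (ℓ + 1) * H0 * Wk k) v q + (((Ak k) ^ (ℓ + 1)) v u * Wk k p q) * t) := by
        funext t
        rw [Matrix.sum_apply]
        exact Finset.sum_congr rfl fun k _ => expand_aux _ H0 (Wk k) u v p q t
      rw [he]
      apply HasDerivAt.fun_sum
      intro k _
      simpa using ((hasDerivAt_id (0:ℝ)).const_mul (((Ak k) ^ (ℓ + 1)) v u * Wk k p q)).const_add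
        (((Ak k) ^ (ℓ + 1) * H0 * Wk k) v q)
    rw [h.unique h2, Matrix.sum_apply, Finset.mul_sum]
    calc |∑ k, ((Ak k) ^ (ℓ + 1)) v u * Wk k p q|
        ≤ ∑ k, |((Ak k) ^ (ℓ + 1)) v u * Wk k p q| := Finset.abs_sum_le_sum_abs _ _
      _ ≤ ∑ k, β * ((Ak k).map (fun x => |x|) ^ (ℓ + 1)) v u := by
          apply Finset.sum_le_sum
          intro k _
          rw [abs_mul, mul_comm]
          exact mul_le_mul (hWk k p q) (abs_pow_entry_le _ _ _ _) (abs_nonneg _) hβ
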